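/- arXiv:1204.1922 — 2 statements merged into one kernel-verified Lean document; each statement's English description precedes it below -/
import Mathlib

section
/- Let α > 0, M ≥ 0, and let F : ℝ × ℝ^d → ℝ^d be such that, for every t ≥ 0, F(t, ·) is α-dissipative, i.e. ⟨x - y, F(t,x) - F(t,y)⟩ ≤ -α·|x - y|² for all x, y, and |F(t,0)| ≤ M. If x : [0,∞) → ℝ^d is differentiable with x'(t) = F(t, x(t)) for all t ≥ 0, then for every ε ∈ (0, α) and every t ≥ 0: |x(t)|² ≤ (M² / (4ε(α - ε)))·(1 - e^{-2(α-ε)t}) + |x(0)|²·e^{-2(α-ε)t}. -/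
open Real Set

/-- Moment estimate along a trajectory of a switched `α`-dissipative vector field whose
value at the origin is bounded by `M`. -/
theorem dissipative_flow_norm_sq_bound {d : ℕ} (α M : ℝ) (hα : 0 < α) (hM : 0 ≤ M)
    (F : ℝ → EuclideanSpace ℝ (Fin d) → EuclideanSpace ℝ (Fin d))
    (hF : ∀ t : ℝ, 0 ≤ t → ∀ x y : EuclideanSpace ℝ (Fin d),
      (inner ℝ (x - y) (F t x - F t y) : ℝ) ≤ -α * ‖x - y‖ ^ 2)
    (hF0 : ∀ t : ℝ, 0 ≤ t → ‖F t 0‖ ≤ M)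
    (x : ℝ → EuclideanSpace ℝ (Fin d))
    (hx : ∀ t : ℝ, 0 ≤ t → HasDerivAt x (F t (x t)) t) :
    ∀ ε : ℝ, ε ∈ Set.Ioo 0 α → ∀ t : ℝ, 0 ≤ t →
      ‖x t‖ ^ 2 ≤ M ^ 2 / (4 * ε * (α - ε)) * (1 - Real.exp (-2 * (α - ε) * t))
        + ‖x 0‖ ^ 2 * Real.exp (-2 * (α - ε) * t) := by
  intro ε ⟨hε0, hεα⟩ t ht
  set K : ℝ := -2 * (α - ε) with hKdef
  have hαε : 0 < α - ε := by linarith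
  have hKne : K ≠ 0 := by
    simp only [hKdef]; intro h; nlinarith
  -- f s = ‖x s‖²
  set f : ℝ → ℝ := fun s => ‖x s‖ ^ 2 with hf
  have hderiv : ∀ s : ℝ, 0 ≤ s →
      HasDerivAt f (2 * (inner ℝ (x s) (F s (x s)) : ℝ)) s := by
    intro s hs
    have h1 := (hx s hs).inner ℝ (hx s hs)
    have h2 : (fun u => (inner ℝ (x u) (x u) : ℝ)) = f := by
      funext u; simp only [hf]; exact real_inner_self_eq_norm_sq _
    rw [h2] at h1
    refine h1.congr_deriv ?_
    rw [real_inner_comm]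
    ring
  have hbound : ∀ s : ℝ, 0 ≤ s →
      2 * (inner ℝ (x s) (F s (x s)) : ℝ) ≤ K * f s + M ^ 2 / (2 * ε) := by
    intro s hs
    have hdis := hF s hs (x s) 0
    simp only [sub_zero] at hdis
    have hsplit : (inner ℝ (x s) (F s (x s)) : ℝ)
        = (inner ℝ (x s) (F s (x s) - F s 0) : ℝ) + (inner ℝ (x s) (F s 0) : ℝ) := by
      rw [← inner_add_right]
      congr 1
      abel
    have hcs : (inner ℝ (x s) (F s 0) : ℝ) ≤ ‖x s‖ * M :=
      le_trans (real_inner_le_norm _ _) (by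
        have := hF0 s hs
        have : ‖x s‖ * ‖F s 0‖ ≤ ‖x s‖ * M :=
          mul_le_mul_of_nonneg_left this (norm_nonneg _)
        linarith)
    have hyoung : ‖x s‖ * M ≤ ε * ‖x s‖ ^ 2 + M ^ 2 / (4 * ε) := by
      have hc : M ^ 2 = 4 * ε * (M ^ 2 / (4 * ε)) := by field_simp
      nlinarith [sq_nonneg (2 * ε * ‖x s‖ - M), hε0]
    have : (inner ℝ (x s) (F s (x s)) : ℝ) ≤ -α * ‖x s‖ ^ 2 + ε * ‖x s‖ ^ 2 + M ^ 2 / (4 * ε) := by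
      rw [hsplit]; linarith
    have hfeq : f s = ‖x s‖ ^ 2 := rfl
    rw [hfeq, hKdef]
    have h4 : M ^ 2 / (2 * ε) = 2 * (M ^ 2 / (4 * ε)) := by
      field_simp; ring
    rw [h4]
    nlinarith
  -- apply Grönwall on [0, t]
  have hcont : ContinuousOn f (Icc 0 t) := by
    intro s hs
    exact ((hderiv s hs.1).continuousAt).continuousWithinAt
  have key := le_gronwallBound_of_liminf_deriv_right_le (f := f)
    (f' := fun s => 2 * (inner ℝ (x s) (F s (x s)) : ℝ))
    (δ := f 0) (K := K) (ε := M ^ 2 / (2 * ε)) (a := 0) (b := t)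
    hcont
    (fun s hs r hr =>
      ((hderiv s hs.1).hasDerivWithinAt (s := Ici s)).liminf_right_slope_le hr)
    le_rfl
    (fun s hs => hbound s hs.1)
    t ⟨ht, le_rfl⟩
  rw [gronwallBound_of_K_ne_0 hKne] at key
  simp only [sub_zero] at key
  have hrw : M ^ 2 / (2 * ε) / K * (Real.exp (K * t) - 1)
      = M ^ 2 / (4 * ε * (α - ε)) * (1 - Real.exp (K * t)) := by
    rw [hKdef]
    field_simp
    ring
  calc f t ≤ f 0 * Real.exp (K * t) + M ^ 2 / (2 * ε) / K * (Real.exp (K * t) - 1) := key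
    _ = M ^ 2 / (4 * ε * (α - ε)) * (1 - Real.exp (K * t)) + f 0 * Real.exp (K * t) := by
        rw [hrw]; ring
end

section
/- Let α > 0 and c > 0, and define F : ℝ → ℝ by F(t) = (1 - exp(-c·(1 - e^{-α t}))) / (1 - exp(-c)) for t > 0 and F(t) = 0 for t ≤ 0. Then for every t ≥ 0: 1 - F(t) = (exp(c·e^{-α t}) - 1) / (exp(c) - 1) ≤ e^{-α t}. Consequently F(t) ≥ 1 - e^{-α t} for all t, i.e. a random variable with cumulative distribution function F is stochastically smaller than an exponential random variable with parameter α. -/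
private lemma exp_convex_aux (c u : ℝ) (hu0 : 0 ≤ u) (hu1 : u ≤ 1) :
    Real.exp (c * u) ≤ 1 - u + u * Real.exp c := by
  have h := convexOn_exp.2 (Set.mem_univ (0 : ℝ)) (Set.mem_univ c)
    (by linarith : (0:ℝ) ≤ 1 - u) hu0 (by ring)
  simp only [smul_eq_mul, mul_zero, zero_add, Real.exp_zero, mul_one] at h
  rw [mul_comm c u]; linarith [h]

/-- Lemma 3.3 of the paper: the cumulative distribution function `F` of the first jump
time of the companion process dominates the exponential cdf `1 - e^{-αt}`, i.e. the jump
time is stochastically smaller than an exponential variable of parameter `α`. -/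
theorem companion_jump_time_stochastically_smaller_than_exponential
    (α c : ℝ) (hα : 0 < α) (hc : 0 < c) (F : ℝ → ℝ)
    (hFpos : ∀ t : ℝ, 0 < t →
      F t = (1 - Real.exp (-c * (1 - Real.exp (-α * t)))) / (1 - Real.exp (-c)))
    (hFneg : ∀ t : ℝ, t ≤ 0 → F t = 0) :
    (∀ t : ℝ, 0 ≤ t →
        1 - F t = (Real.exp (c * Real.exp (-α * t)) - 1) / (Real.exp c - 1) ∧
        1 - F t ≤ Real.exp (-α * t)) ∧
      ∀ t : ℝ, 1 - Real.exp (-α * t) ≤ F t := by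
  have hE : 0 < Real.exp c - 1 := by
    have := Real.add_one_lt_exp hc.ne'
    linarith
  have hD : 0 < 1 - Real.exp (-c) := by
    have : Real.exp (-c) < 1 := Real.exp_lt_one_iff.mpr (by linarith)
    linarith
  have key : ∀ t : ℝ, 0 ≤ t →
      1 - F t = (Real.exp (c * Real.exp (-α * t)) - 1) / (Real.exp c - 1) ∧
      1 - F t ≤ Real.exp (-α * t) := by
    intro t ht
    set u := Real.exp (-α * t) with hu
    have hu0 : 0 < u := Real.exp_pos _
    have hu1 : u ≤ 1 := Real.exp_le_one_iff.mpr (by nlinarith)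
    have heq : 1 - F t = (Real.exp (c * u) - 1) / (Real.exp c - 1) := by
      rcases eq_or_lt_of_le ht with h0 | h0
      · rw [hFneg t h0.ge, hu, ← h0]
        simp [div_self hE.ne']
      · rw [hFpos t h0]
        have hrw : Real.exp (-c * (1 - u)) = Real.exp (-c) * Real.exp (c * u) := by
          rw [← Real.exp_add]; ring_nf
        rw [hrw]
        have hinv : Real.exp (-c) = (Real.exp c)⁻¹ := Real.exp_neg c
        rw [hinv] at hD ⊢
        have hne : Real.exp c ≠ 0 := (Real.exp_pos c).ne'
        field_simp
        ring
    refine ⟨heq, ?_⟩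
    rw [heq, div_le_iff₀ hE]
    have := exp_convex_aux c u hu0.le hu1
    nlinarith
  refine ⟨key, ?_⟩
  intro t
  rcases le_or_gt t 0 with ht | ht
  · rw [hFneg t ht]
    have : 1 ≤ Real.exp (-α * t) := Real.one_le_exp_iff.mpr (by nlinarith)
    linarith
  · have := (key t ht.le).2
    linarith
end
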